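/- Assume n > 2 and m ≥ 3. Then no successive elimination rule is regret-free truth-telling. -/

import Mathlib

open Function

/-- A preference: a bijection from positions (`0` = bottom/worst, `m-1` = top/best)
to alternatives.  `p k` is the alternative in the `(k+1)`-th position from the bottom. -/
abbrev Pref (m : ℕ) := Equiv.Perm (Fin m)

/-- A profile: one preference for each of the `n` agents. -/
abbrev Profile (n m : ℕ) := Fin n → Pref m

/-- `x` is strictly preferred to `y` under `p`. -/
def prefers {m : ℕ} (p : Pref m) (x y : Fin m) : Prop :=
  p.symm y < p.symm x

instance {m : ℕ} (p : Pref m) (x y : Fin m) : Decidable (prefers p x y) :=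
  inferInstanceAs (Decidable (p.symm y < p.symm x))

/-- `x` is the top (best) alternative of `p`. -/
def IsBest {m : ℕ} (p : Pref m) (x : Fin m) : Prop :=
  ∀ y, p.symm y ≤ p.symm x

instance {m : ℕ} (p : Pref m) (x : Fin m) : Decidable (IsBest p x) :=
  inferInstanceAs (Decidable (∀ y, p.symm y ≤ p.symm x))

/-- Regret-free truth-telling: whenever a misreport `Pi'` by agent `i` yields a strictly
better outcome, there is a subprofile of the others (a full profile `Pstar` agreeing with
`P` at `i`) consistent with the observed outcome at which the misreport does strictly worse. -/
def RFTT {n m : ℕ} (f : Profile n m → Fin m) : Prop :=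
  ∀ (i : Fin n) (P : Profile n m) (Pi' : Pref m),
    prefers (P i) (f (update P i Pi')) (f P) →
    ∃ Pstar : Profile n m, Pstar i = P i ∧ f Pstar = f P ∧
      prefers (P i) (f Pstar) (f (update Pstar i Pi'))

/-- Strategy-proofness: truth-telling yields a weakly better outcome. -/
def StrategyProof {n m : ℕ} (f : Profile n m → Fin m) : Prop :=
  ∀ (P : Profile n m) (i : Fin n) (Pi' : Pref m),
    f P = f (update P i Pi') ∨ prefers (P i) (f P) (f (update P i Pi'))

/-- Tops-only: the outcome only depends on the agents' top alternatives. -/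
def TopsOnly {n m : ℕ} (f : Profile n m → Fin m) : Prop :=
  ∀ P P' : Profile n m, (∀ i x, IsBest (P i) x ↔ IsBest (P' i) x) → f P = f P'

/-- Efficiency: no alternative is strictly preferred to the outcome by every agent. -/
def Efficient {n m : ℕ} (f : Profile n m → Fin m) : Prop :=
  ∀ P : Profile n m, ¬ ∃ y, ∀ i, prefers (P i) y (f P)

/-- Dictatorship: some agent always gets his top alternative. -/
def Dictatorial {n m : ℕ} (f : Profile n m → Fin m) : Prop :=
  ∃ i : Fin n, ∀ P : Profile n m, IsBest (P i) (f P)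

/-- Anonymity: invariance under permutations of the agents. -/
def Anonymous {n m : ℕ} (f : Profile n m → Fin m) : Prop :=
  ∀ (P : Profile n m) (σ : Equiv.Perm (Fin n)), f P = f (fun i => P (σ i))

/-- Neutrality: relabelling the alternatives relabels the outcome accordingly. -/
def Neutral {n m : ℕ} (f : Profile n m → Fin m) : Prop :=
  ∀ (P : Profile n m) (π : Equiv.Perm (Fin m)),
    π (f P) = f (fun i => (P i).trans π)

/-- The minimal position (`0`-indexed, from the bottom) of alternative `x` in profile `P`. -/
noncomputable def minpos {n m : ℕ} (P : Profile n m) (x : Fin m) : ℕ :=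
  ⨅ i : Fin n, ((P i).symm x : ℕ)

/-- The maxmin winners of profile `P`. -/
def MaxminSet {n m : ℕ} (P : Profile n m) : Set (Fin m) :=
  {x | ∀ y, minpos P y ≤ minpos P x}

/-- An `A`-maxmin rule: breaks ties among maxmin winners by a fixed strict linear order. -/
def AMaxmin {n m : ℕ} (f : Profile n m → Fin m) : Prop :=
  ∃ r : Fin m → Fin m → Prop, IsStrictTotalOrder (Fin m) r ∧
    ∀ P : Profile n m, f P ∈ MaxminSet P ∧ ∀ y ∈ MaxminSet P, y ≠ f P → r (f P) y

/-- An `N`-maxmin rule: breaks ties among maxmin winners by a fixed agent's preference. -/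
def NMaxmin {n m : ℕ} (f : Profile n m → Fin m) : Prop :=
  ∃ i : Fin n, ∀ P : Profile n m,
    f P ∈ MaxminSet P ∧ ∀ y ∈ MaxminSet P, y ≠ f P → prefers (P i) (f P) y

/-- The score of alternative `x` in profile `P`, for scores `s` (indexed by position
from the bottom). -/
noncomputable def score {n m : ℕ} (s : Fin m → ℝ) (P : Profile n m) (x : Fin m) : ℝ :=
  ∑ i : Fin n, s ((P i).symm x)

/-- The scoring winners of profile `P`. -/
def ScoreSet {n m : ℕ} (s : Fin m → ℝ) (P : Profile n m) : Set (Fin m) :=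
  {x | ∀ y, score s P y ≤ score s P x}

/-- An `A`-scoring rule: breaks ties among scoring winners by a fixed strict linear order. -/
def AScoring {n m : ℕ} (s : Fin m → ℝ) (f : Profile n m → Fin m) : Prop :=
  ∃ r : Fin m → Fin m → Prop, IsStrictTotalOrder (Fin m) r ∧
    ∀ P : Profile n m, f P ∈ ScoreSet s P ∧ ∀ y ∈ ScoreSet s P, y ≠ f P → r (f P) y

/-- An `N`-scoring rule: breaks ties among scoring winners by a fixed agent's preference. -/
def NScoring {n m : ℕ} (s : Fin m → ℝ) (f : Profile n m → Fin m) : Prop :=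
  ∃ i : Fin n, ∀ P : Profile n m,
    f P ∈ ScoreSet s P ∧ ∀ y ∈ ScoreSet s P, y ≠ f P → prefers (P i) (f P) y

/-- The number of agents preferring `a` to `b` in profile `P`. -/
def numPref {n m : ℕ} (P : Profile n m) (a b : Fin m) : ℕ :=
  (Finset.univ.filter fun i => prefers (P i) a b).card

/-- `a` is a Condorcet winner at `P`. -/
def CondorcetWinner {n m : ℕ} (P : Profile n m) (a : Fin m) : Prop :=
  ∀ b, b ≠ a → numPref P b a < numPref P a b

/-- Condorcet consistency: the rule picks the Condorcet winner whenever one exists. -/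
def CondorcetConsistent {n m : ℕ} (f : Profile n m → Fin m) : Prop :=
  ∀ (P : Profile n m) (a : Fin m), CondorcetWinner P a → f P = a

/-- `p'` is a monotonic transformation of `p` with respect to `a`: all positions up to
(and including) the position of `a` are unchanged. -/
def MonoTransf {m : ℕ} (p p' : Pref m) (a : Fin m) : Prop :=
  ∀ k : Fin m, k ≤ p.symm a → p k = p' k

/-- Monotonicity: an alternative ranked below the outcome by agent `i` cannot become
the outcome after a monotonic transformation of `i`'s preference w.r.t. the outcome. -/
def MonotoneRule {n m : ℕ} (f : Profile n m → Fin m) : Prop :=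
  ∀ (P : Profile n m) (i : Fin n) (b : Fin m), prefers (P i) (f P) b →
    ∀ Pi' : Pref m, MonoTransf (P i) Pi' (f P) → f (update P i Pi') ≠ b

/-- One pairwise majority contest: the challenger `y` beats the incumbent `c` only if
strictly more agents prefer `y` to `c` (ties go to the incumbent, who always comes
earlier in the fixed order). -/
def duel {n m : ℕ} (P : Profile n m) (c y : Fin m) : Fin m :=
  if numPref P c y < numPref P y c then y else c

/-- Run successive pairwise contests starting from incumbent `c` against the listed
challengers in order. -/
def seRun {n m : ℕ} (P : Profile n m) : Fin m → List (Fin m) → Fin m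
  | c, [] => c
  | c, y :: rest => seRun P (duel P c y) rest

/-- The survivor of successive elimination along a list of alternatives (none if empty). -/
def seWinner? {n m : ℕ} (P : Profile n m) : List (Fin m) → Option (Fin m)
  | [] => none
  | c :: rest => some (seRun P c rest)

/-- A successive elimination rule: there is an enumeration `e 0 ≻ e 1 ≻ ⋯ ≻ e (m-1)` of the
alternatives such that the rule outputs the survivor of the sequential pairwise majority
contests (ties resolved in favour of the `≻`-greater, i.e. earlier, alternative). -/
def SuccElim {n m : ℕ} (f : Profile n m → Fin m) : Prop :=
  ∃ e : Fin m ≃ Fin m, ∀ P : Profile n m,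
    seWinner? P ((List.finRange m).map e) = some (f P)

section StmtAux

private def tau1 (M : ℕ) : Equiv.Perm (Fin (M+3)) := (Equiv.swap 0 1).trans (Equiv.swap 0 2)
private def rho1 (M : ℕ) : Equiv.Perm (Fin (M+3)) := (tau1 M).trans Fin.revPerm
private def rho2 (M : ℕ) : Equiv.Perm (Fin (M+3)) := (tau1 M).symm.trans Fin.revPerm
private def rho0 (M : ℕ) : Equiv.Perm (Fin (M+3)) := Fin.revPerm.trans (Equiv.swap (Fin.rev 2) 0)
private def rho0' (M : ℕ) : Equiv.Perm (Fin (M+3)) := (Equiv.swap 0 1).trans (rho0 M)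

private lemma tau1_fix (M : ℕ) (x : Fin (M+3)) (hx : 3 ≤ x.val) : tau1 M x = x := by
  have h0 : x ≠ 0 := Fin.ne_of_val_ne (by simp only [Fin.val_zero, Fin.val_one, Fin.val_two]; omega)
  have h1 : x ≠ 1 := Fin.ne_of_val_ne (by simp only [Fin.val_zero, Fin.val_one, Fin.val_two]; omega)
  have h2 : x ≠ 2 := Fin.ne_of_val_ne (by simp only [Fin.val_zero, Fin.val_one, Fin.val_two]; omega)
  simp [tau1, Equiv.swap_apply_of_ne_of_ne, h0, h1, h2]

private lemma tau1_fix' (M : ℕ) (x : Fin (M+3)) (hx : 3 ≤ x.val) : (tau1 M).symm x = x := by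
  rw [Equiv.symm_apply_eq, tau1_fix M x hx]

private lemma rho1_v0 (M : ℕ) : ((rho1 M 0 : Fin (M+3)) : ℕ) = M+1 := by
  simp [rho1, tau1, Equiv.swap_apply_def, Fin.ext_iff, Fin.val_rev, Nat.mod_eq_of_lt (show 2 < M+3 by omega)]
private lemma rho1_v1 (M : ℕ) : ((rho1 M 1 : Fin (M+3)) : ℕ) = M := by
  simp [rho1, tau1, Equiv.swap_apply_def, Fin.ext_iff, Fin.val_rev, Nat.mod_eq_of_lt (show 2 < M+3 by omega)]
private lemma rho1_v2 (M : ℕ) : ((rho1 M 2 : Fin (M+3)) : ℕ) = M+2 := by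
  simp [rho1, tau1, Equiv.swap_apply_def, Fin.ext_iff, Fin.val_rev, Nat.mod_eq_of_lt (show 2 < M+3 by omega)]
private lemma rho1_vx (M : ℕ) (x : Fin (M+3)) (hx : 3 ≤ x.val) :
    ((rho1 M x : Fin (M+3)) : ℕ) = M+2-x.val := by
  simp [rho1, tau1_fix M x hx, Fin.val_rev]

private lemma rho2_v0 (M : ℕ) : ((rho2 M 0 : Fin (M+3)) : ℕ) = M := by
  simp [rho2, tau1, Equiv.swap_apply_def, Fin.ext_iff, Fin.val_rev, Nat.mod_eq_of_lt (show 2 < M+3 by omega)]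
private lemma rho2_v1 (M : ℕ) : ((rho2 M 1 : Fin (M+3)) : ℕ) = M+2 := by
  simp [rho2, tau1, Equiv.swap_apply_def, Fin.ext_iff, Fin.val_rev, Nat.mod_eq_of_lt (show 2 < M+3 by omega)]
private lemma rho2_v2 (M : ℕ) : ((rho2 M 2 : Fin (M+3)) : ℕ) = M+1 := by
  simp [rho2, tau1, Equiv.swap_apply_def, Fin.ext_iff, Fin.val_rev, Nat.mod_eq_of_lt (show 2 < M+3 by omega)]
private lemma rho2_vx (M : ℕ) (x : Fin (M+3)) (hx : 3 ≤ x.val) :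
    ((rho2 M x : Fin (M+3)) : ℕ) = M+2-x.val := by
  simp [rho2, tau1_fix' M x hx, Fin.val_rev]

private lemma rho0_v0 (M : ℕ) : ((rho0 M 0 : Fin (M+3)) : ℕ) = M+2 := by
  simp [rho0, Equiv.swap_apply_def, Fin.ext_iff, Fin.val_rev, Nat.mod_eq_of_lt (show 2 < M+3 by omega)]
private lemma rho0_v1 (M : ℕ) : ((rho0 M 1 : Fin (M+3)) : ℕ) = M+1 := by
  simp [rho0, Equiv.swap_apply_def, Fin.ext_iff, Fin.val_rev, Nat.mod_eq_of_lt (show 2 < M+3 by omega)]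
private lemma rho0_v2 (M : ℕ) : ((rho0 M 2 : Fin (M+3)) : ℕ) = 0 := by
  simp [rho0, Equiv.swap_apply_def, Fin.ext_iff, Fin.val_rev, Nat.mod_eq_of_lt (show 2 < M+3 by omega)]
private lemma rho0_vx (M : ℕ) (x : Fin (M+3)) (hx : 3 ≤ x.val) :
    ((rho0 M x : Fin (M+3)) : ℕ) ≤ M := by
  have hlt := x.isLt
  have hne2 : Fin.rev x ≠ Fin.rev 2 := fun hc =>
    absurd (Fin.rev_injective hc) (Fin.ne_of_val_ne (by simp only [Fin.val_zero, Fin.val_one, Fin.val_two]; omega))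
  rcases eq_or_ne (Fin.rev x) 0 with h | h
  · have hr : rho0 M x = Fin.rev 2 := by
      simp [rho0, h, Equiv.swap_apply_right]
    rw [hr]; simp [Fin.val_rev, Nat.mod_eq_of_lt (show 2 < M+3 by omega)]
  · have hr : rho0 M x = Fin.rev x := by
      simp [rho0, Equiv.swap_apply_of_ne_of_ne hne2 h]
    rw [hr]; simp [Fin.val_rev]; omega

private lemma rho0'_v0 (M : ℕ) : ((rho0' M 0 : Fin (M+3)) : ℕ) = M+1 := by
  simp [rho0', Equiv.swap_apply_left]; exact rho0_v1 M
private lemma rho0'_v1 (M : ℕ) : ((rho0' M 1 : Fin (M+3)) : ℕ) = M+2 := by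
  simp [rho0', Equiv.swap_apply_right]; exact rho0_v0 M
private lemma rho0'_v2 (M : ℕ) : ((rho0' M 2 : Fin (M+3)) : ℕ) = 0 := by
  have h0 : (2:Fin (M+3)) ≠ 0 := Fin.ne_of_val_ne (by simp only [Fin.val_zero, Fin.val_one, Fin.val_two]; omega)
  have h1 : (2:Fin (M+3)) ≠ 1 := Fin.ne_of_val_ne (by simp only [Fin.val_zero, Fin.val_one, Fin.val_two]; omega)
  simp [rho0', Equiv.swap_apply_of_ne_of_ne h0 h1]; exact Fin.ext (by rw [rho0_v2 M, Fin.val_zero])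
private lemma rho0'_vx (M : ℕ) (x : Fin (M+3)) (hx : 3 ≤ x.val) :
    ((rho0' M x : Fin (M+3)) : ℕ) ≤ M := by
  have h0 : x ≠ 0 := Fin.ne_of_val_ne (by simp only [Fin.val_zero, Fin.val_one, Fin.val_two]; omega)
  have h1 : x ≠ 1 := Fin.ne_of_val_ne (by simp only [Fin.val_zero, Fin.val_one, Fin.val_two]; omega)
  simp [rho0', Equiv.swap_apply_of_ne_of_ne h0 h1]; exact rho0_vx M x hx

private lemma seRun_eq_self {n m : ℕ} (P : Profile n m) (c : Fin m) (l : List (Fin m))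
    (h : ∀ y ∈ l, duel P c y = c) : seRun P c l = c := by
  induction l with
  | nil => rfl
  | cons y t ih =>
      rw [seRun, h y (by simp)]
      exact ih fun z hz => h z (by simp [hz])

private lemma finRange_decomp (M : ℕ) :
    ∃ l : List (Fin (M+3)), List.finRange (M+3) = 0 :: 1 :: 2 :: l ∧ ∀ x ∈ l, 3 ≤ x.val := by
  refine ⟨(List.finRange M).map (fun x => x.succ.succ.succ), ?_, ?_⟩
  · have h1 : List.finRange (M+3) = 0 :: List.map Fin.succ (List.finRange (M+2)) :=
      List.finRange_succ
    have h2 : List.finRange (M+2) = 0 :: List.map Fin.succ (List.finRange (M+1)) :=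
      List.finRange_succ
    have h3 : List.finRange (M+1) = 0 :: List.map Fin.succ (List.finRange M) :=
      List.finRange_succ
    rw [h1, h2, h3]
    simp [List.map_map, Function.comp_def, Fin.ext_iff]
  · intro x hx
    simp only [List.mem_map] at hx
    obtain ⟨y, _, rfl⟩ := hx
    simp

private def Oset (N : ℕ) : Finset (Fin (N+3)) := Finset.univ.filter (fun j => j.val % 2 = 1)
private def Eset (N : ℕ) : Finset (Fin (N+3)) :=
  Finset.univ.filter (fun j => j ≠ 0 ∧ j.val % 2 = 0)

private lemma cardEO (N : ℕ) : (Eset N).card ≤ (Oset N).card := by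
  apply Finset.card_le_card_of_injOn (fun j => (⟨j.val - 1, by omega⟩ : Fin (N+3)))
  · intro j hj
    simp only [Finset.mem_coe] at hj ⊢
    simp only [Eset, Finset.mem_filter, Finset.mem_univ, true_and] at hj
    have hj0 : j.val ≠ 0 := fun hc => hj.1 (Fin.ext_iff.mpr (by simpa using hc))
    simp only [Oset, Finset.mem_filter, Finset.mem_univ, true_and]
    omega
  · intro a ha b hb hab
    simp only [Finset.coe_filter, Set.mem_setOf_eq, Eset, Finset.mem_coe] at ha hb
    have ha0 : a.val ≠ 0 := fun hc => (by simp [Eset, Fin.ext_iff, hc] at ha)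
    have hb0 : b.val ≠ 0 := fun hc => (by simp [Eset, Fin.ext_iff, hc] at hb)
    have := Fin.ext_iff.mp hab
    simp only at this
    exact Fin.ext (by omega)

private lemma cardOE (N : ℕ) : (Oset N).card ≤ (Eset N).card + 1 := by
  have h1 : (Oset N).card ≤ (insert (0 : Fin (N+3)) (Eset N)).card := by
    apply Finset.card_le_card_of_injOn (fun j => (⟨j.val - 1, by omega⟩ : Fin (N+3)))
    · intro j hj
      simp only [Finset.mem_coe] at hj ⊢
      simp only [Oset, Finset.mem_filter, Finset.mem_univ, true_and] at hj
      rcases eq_or_ne j.val 1 with h | h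
      · have : (⟨j.val - 1, by omega⟩ : Fin (N+3)) = 0 := Fin.ext (by simp [h])
        rw [this]
        exact Finset.mem_insert_self 0 _
      · apply Finset.mem_insert_of_mem
        simp only [Eset, Finset.mem_filter, Finset.mem_univ, true_and]
        refine ⟨fun hc => ?_, by omega⟩
        have := Fin.ext_iff.mp hc
        simp only [Fin.val_zero, Fin.val_mk] at this
        omega
    · intro a ha b hb hab
      simp only [Finset.mem_coe, Oset, Finset.mem_filter, Finset.mem_univ, true_and] at ha hb
      have := Fin.ext_iff.mp hab
      simp only at this
      exact Fin.ext (by omega)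
  calc (Oset N).card ≤ _ := h1
    _ ≤ (Eset N).card + 1 := Finset.card_insert_le _ _

end StmtAux

/-- Assume n > 2 and m ≥ 3. Then no successive elimination rule is
regret-free truth-telling. -/
theorem stmt_17 (n m : ℕ) (hn : 2 < n) (hm : 3 ≤ m)
    (f : Profile n m → Fin m) (hf : SuccElim f) :
    ¬ RFTT f := by
  obtain ⟨M, rfl⟩ : ∃ M, m = M + 3 := ⟨m - 3, by omega⟩
  obtain ⟨N, rfl⟩ : ∃ N, n = N + 3 := ⟨n - 3, by omega⟩
  obtain ⟨e, he⟩ := hf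
  intro hR
  classical
  -- the auxiliary "position" permutations, shared notation
  set rr : Fin (N+3) → Equiv.Perm (Fin (M+3)) :=
    fun j => if j = 0 then rho0 M else if j.val % 2 = 1 then rho2 M else rho1 M with hrr
  set P : Profile (N+3) (M+3) := fun j => (e.symm.trans (rr j)).symm with hPdef
  set p0' : Pref (M+3) := (e.symm.trans (rho0' M)).symm with hp0'def
  set P' : Profile (N+3) (M+3) := Function.update P 0 p0' with hP'def
  -- basic characterization of `prefers`
  have hpref : ∀ (ρ : Equiv.Perm (Fin (M+3))) (s t : Fin (M+3)),
      prefers ((e.symm.trans ρ).symm) (e s) (e t) ↔ ((ρ t : ℕ) < (ρ s : ℕ)) := by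
    intro ρ s t
    simp only [prefers, Equiv.symm_symm, Equiv.trans_apply, Equiv.symm_apply_apply, Fin.lt_def]
  have hprefP : ∀ (j : Fin (N+3)) (s t : Fin (M+3)),
      prefers (P j) (e s) (e t) ↔ (((rr j) t : ℕ) < ((rr j) s : ℕ)) := by
    intro j s t
    rw [hPdef]
    exact hpref (rr j) s t
  have hprefP' : ∀ (j : Fin (N+3)) (s t : Fin (M+3)), j ≠ 0 →
      (prefers (P' j) (e s) (e t) ↔ (((rr j) t : ℕ) < ((rr j) s : ℕ))) := by
    intro j s t hj
    rw [hP'def, Function.update_of_ne hj]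
    exact hprefP j s t
  have hprefP'0 : ∀ (s t : Fin (M+3)),
      prefers (P' 0) (e s) (e t) ↔ (((rho0' M) t : ℕ) < ((rho0' M) s : ℕ)) := by
    intro s t
    rw [hP'def, Function.update_self, hp0'def]
    exact hpref (rho0' M) s t
  have hrr0 : rr 0 = rho0 M := by rw [hrr]; simp
  have hrrO : ∀ j : Fin (N+3), j ≠ 0 → j.val % 2 = 1 → rr j = rho2 M := by
    intro j hj hjo; rw [hrr]; simp [hj, hjo]
  have hrrE : ∀ j : Fin (N+3), j ≠ 0 → j.val % 2 = 0 → rr j = rho1 M := by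
    intro j hj hje; rw [hrr]; simp [hj, hje]
  have hval0 : ∀ j : Fin (N+3), j ≠ 0 ↔ j.val ≠ 0 := by
    intro j
    constructor
    · intro h hc
      exact h (Fin.ext (by simpa using hc))
    · intro h hc
      exact h (by simp [hc])
  -- counting helpers
  have hnum_le : ∀ (Q : Profile (N+3) (M+3)) (x y : Fin (M+3)) (S : Finset (Fin (N+3))),
      (∀ j, prefers (Q j) x y → j ∈ S) → numPref Q x y ≤ S.card := by
    intro Q x y S hS
    apply Finset.card_le_card
    intro j hj
    rw [Finset.mem_filter] at hj
    exact hS j hj.2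
  have hnum_ge : ∀ (Q : Profile (N+3) (M+3)) (x y : Fin (M+3)) (S : Finset (Fin (N+3))),
      (∀ j ∈ S, prefers (Q j) x y) → S.card ≤ numPref Q x y := by
    intro Q x y S hS
    apply Finset.card_le_card
    intro j hj
    rw [Finset.mem_filter]
    exact ⟨Finset.mem_univ j, hS j hj⟩
  have hinsE : (insert (0 : Fin (N+3)) (Eset N)).card = (Eset N).card + 1 :=
    Finset.card_insert_of_notMem (by simp [Eset])
  have hinsO : (insert (0 : Fin (N+3)) (Oset N)).card = (Oset N).card + 1 :=
    Finset.card_insert_of_notMem (by simp [Oset])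
  -- TRUTHFUL ROUND 1 : a = e 0 survives against b = e 1
  have hd1 : duel P (e 0) (e 1) = e 0 := by
    rw [duel, if_neg]
    push_neg
    have hub : numPref P (e 1) (e 0) ≤ (Oset N).card := by
      apply hnum_le
      intro j hj
      simp only [Oset, Finset.mem_filter, Finset.mem_univ, true_and]
      by_contra hodd
      have he2 : j.val % 2 = 0 := by omega
      rcases eq_or_ne j 0 with rfl | hj0
      · rw [hprefP, hrr0, rho0_v0, rho0_v1] at hj; omega
      · rw [hprefP, hrrE j hj0 he2, rho1_v0, rho1_v1] at hj; omega
    have hlb : (insert (0 : Fin (N+3)) (Eset N)).card ≤ numPref P (e 0) (e 1) := by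
      apply hnum_ge
      intro j hj
      rcases Finset.mem_insert.mp hj with rfl | hj
      · rw [hprefP, hrr0, rho0_v0, rho0_v1]; omega
      · simp only [Eset, Finset.mem_filter, Finset.mem_univ, true_and] at hj
        rw [hprefP, hrrE j hj.1 hj.2, rho1_v0, rho1_v1]; omega
    have := cardOE N
    omega
  -- TRUTHFUL ROUND 2 : c = e 2 beats a = e 0
  have hd2 : duel P (e 0) (e 2) = e 2 := by
    rw [duel, if_pos]
    have hub : numPref P (e 0) (e 2) ≤ ({0} : Finset (Fin (N+3))).card := by
      apply hnum_le
      intro j hj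
      simp only [Finset.mem_singleton]
      by_contra hj0
      rcases Nat.even_or_odd j.val with hje | hjo
      · rw [hprefP, hrrE j hj0 (Nat.even_iff.mp hje), rho1_v0, rho1_v2] at hj; omega
      · rw [hprefP, hrrO j hj0 (Nat.odd_iff.mp hjo), rho2_v0, rho2_v2] at hj; omega
    have hlb : (Finset.univ.filter (fun j : Fin (N+3) => j ≠ 0)).card
        ≤ numPref P (e 2) (e 0) := by
      apply hnum_ge
      intro j hj
      simp only [Finset.mem_filter, Finset.mem_univ, true_and] at hj
      rcases Nat.even_or_odd j.val with hje | hjo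
      · rw [hprefP, hrrE j hj (Nat.even_iff.mp hje), rho1_v0, rho1_v2]; omega
      · rw [hprefP, hrrO j hj (Nat.odd_iff.mp hjo), rho2_v0, rho2_v2]; omega
    have hcard : (Finset.univ.filter (fun j : Fin (N+3) => j ≠ 0)).card = N+2 := by
      rw [Finset.filter_ne']
      rw [Finset.card_erase_of_mem (Finset.mem_univ _)]
      simp
    simp only [Finset.card_singleton] at hub
    omega
  -- TRUTHFUL REMAINING ROUNDS : c = e 2 beats every e x with x ≥ 3
  have hd3 : ∀ x : Fin (M+3), 3 ≤ x.val → duel P (e 2) (e x) = e 2 := by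
    intro x hx
    rw [duel, if_neg]
    push_neg
    have hub : numPref P (e x) (e 2) ≤ ({0} : Finset (Fin (N+3))).card := by
      apply hnum_le
      intro j hj
      simp only [Finset.mem_singleton]
      by_contra hj0
      rcases Nat.even_or_odd j.val with hje | hjo
      · rw [hprefP, hrrE j hj0 (Nat.even_iff.mp hje), rho1_v2, rho1_vx M x hx] at hj; omega
      · rw [hprefP, hrrO j hj0 (Nat.odd_iff.mp hjo), rho2_v2, rho2_vx M x hx] at hj; omega
    have hlb : (Finset.univ.filter (fun j : Fin (N+3) => j ≠ 0)).card
        ≤ numPref P (e 2) (e x) := by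
      apply hnum_ge
      intro j hj
      simp only [Finset.mem_filter, Finset.mem_univ, true_and] at hj
      rcases Nat.even_or_odd j.val with hje | hjo
      · rw [hprefP, hrrE j hj (Nat.even_iff.mp hje), rho1_v2, rho1_vx M x hx]; omega
      · rw [hprefP, hrrO j hj (Nat.odd_iff.mp hjo), rho2_v2, rho2_vx M x hx]; omega
    have hcard : (Finset.univ.filter (fun j : Fin (N+3) => j ≠ 0)).card = N+2 := by
      rw [Finset.filter_ne']
      rw [Finset.card_erase_of_mem (Finset.mem_univ _)]
      simp
    simp only [Finset.card_singleton] at hub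
    omega
  -- MISREPORT ROUND 1 : b = e 1 beats a = e 0
  have hd1' : duel P' (e 0) (e 1) = e 1 := by
    rw [duel, if_pos]
    have hub : numPref P' (e 0) (e 1) ≤ (Eset N).card := by
      apply hnum_le
      intro j hj
      simp only [Eset, Finset.mem_filter, Finset.mem_univ, true_and]
      by_contra hc
      push_neg at hc
      rcases eq_or_ne j 0 with rfl | hj0
      · rw [hprefP'0, rho0'_v0, rho0'_v1] at hj; omega
      · have hodd : j.val % 2 = 1 := by
          by_contra h'
          exact hc hj0 (by omega)
        rw [hprefP' j _ _ hj0, hrrO j hj0 hodd, rho2_v0, rho2_v1] at hj; omega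
    have hlb : (insert (0 : Fin (N+3)) (Oset N)).card ≤ numPref P' (e 1) (e 0) := by
      apply hnum_ge
      intro j hj
      rcases Finset.mem_insert.mp hj with rfl | hj
      · rw [hprefP'0, rho0'_v0, rho0'_v1]; omega
      · simp only [Oset, Finset.mem_filter, Finset.mem_univ, true_and] at hj
        have hj0 : j ≠ 0 := by
          rw [hval0]; omega
        rw [hprefP' j _ _ hj0, hrrO j hj0 hj, rho2_v0, rho2_v1]; omega
    have := cardEO N
    omega
  -- MISREPORT ROUND 2 : b = e 1 survives against c = e 2
  have hd2' : duel P' (e 1) (e 2) = e 1 := by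
    rw [duel, if_neg]
    push_neg
    have hub : numPref P' (e 2) (e 1) ≤ (Eset N).card := by
      apply hnum_le
      intro j hj
      simp only [Eset, Finset.mem_filter, Finset.mem_univ, true_and]
      by_contra hc
      push_neg at hc
      rcases eq_or_ne j 0 with rfl | hj0
      · rw [hprefP'0, rho0'_v1, rho0'_v2] at hj; omega
      · have hodd : j.val % 2 = 1 := by
          by_contra h'
          exact hc hj0 (by omega)
        rw [hprefP' j _ _ hj0, hrrO j hj0 hodd, rho2_v1, rho2_v2] at hj; omega
    have hlb : (insert (0 : Fin (N+3)) (Oset N)).card ≤ numPref P' (e 1) (e 2) := by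
      apply hnum_ge
      intro j hj
      rcases Finset.mem_insert.mp hj with rfl | hj
      · rw [hprefP'0, rho0'_v1, rho0'_v2]; omega
      · simp only [Oset, Finset.mem_filter, Finset.mem_univ, true_and] at hj
        have hj0 : j ≠ 0 := by rw [hval0]; omega
        rw [hprefP' j _ _ hj0, hrrO j hj0 hj, rho2_v1, rho2_v2]; omega
    have := cardEO N
    omega
  -- MISREPORT REMAINING ROUNDS : b = e 1 beats every e x with x ≥ 3
  have hd3' : ∀ x : Fin (M+3), 3 ≤ x.val → duel P' (e 1) (e x) = e 1 := by
    intro x hx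
    rw [duel, if_neg]
    push_neg
    have hub : numPref P' (e x) (e 1) ≤ (∅ : Finset (Fin (N+3))).card := by
      apply hnum_le
      intro j hj
      exfalso
      rcases eq_or_ne j 0 with rfl | hj0
      · rw [hprefP'0, rho0'_v1] at hj
        have := rho0'_vx M x hx
        omega
      · rcases Nat.even_or_odd j.val with hje | hjo
        · rw [hprefP' j _ _ hj0, hrrE j hj0 (Nat.even_iff.mp hje), rho1_v1,
            rho1_vx M x hx] at hj
          omega
        · rw [hprefP' j _ _ hj0, hrrO j hj0 (Nat.odd_iff.mp hjo), rho2_v1,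
            rho2_vx M x hx] at hj
          omega
    simp only [Finset.card_empty] at hub
    omega
  -- compute the outcomes
  obtain ⟨l, hl, hl3⟩ := finRange_decomp M
  have hmap : (List.finRange (M+3)).map e = e 0 :: e 1 :: e 2 :: l.map e := by
    rw [hl]; rfl
  have hfP : f P = e 2 := by
    have h := he P
    rw [hmap] at h
    simp only [seWinner?, seRun, Option.some.injEq] at h
    rw [hd1, hd2] at h
    rw [seRun_eq_self P (e 2) (l.map e) ?_] at h
    · exact h.symm
    · intro y hy
      obtain ⟨x, hxl, rfl⟩ := List.mem_map.mp hy
      exact hd3 x (hl3 x hxl)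
  have hfP' : f P' = e 1 := by
    have h := he P'
    rw [hmap] at h
    simp only [seWinner?, seRun, Option.some.injEq] at h
    rw [hd1', hd2'] at h
    rw [seRun_eq_self P' (e 1) (l.map e) ?_] at h
    · exact h.symm
    · intro y hy
      obtain ⟨x, hxl, rfl⟩ := List.mem_map.mp hy
      exact hd3' x (hl3 x hxl)
  -- apply RFTT to get a contradiction
  have hbetter : prefers (P 0) (f (Function.update P 0 p0')) (f P) := by
    rw [← hP'def, hfP, hfP', hprefP 0 1 2, hrr0, rho0_v1, rho0_v2]
    omega
  obtain ⟨Ps, hs0, hsf, hsp⟩ := hR 0 P p0' hbetter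
  rw [hsf, hfP] at hsp
  -- hsp : prefers (P 0) (e 2) (f (update Ps 0 p0'))  -- impossible: e 2 is the bottom
  have hbot : ((P 0).symm (e 2) : ℕ) = 0 := by
    have : (P 0).symm (e 2) = rr 0 2 := by rw [hPdef]; simp
    rw [this, hrr0]
    exact rho0_v2 M
  rw [prefers, Fin.lt_def, hbot] at hsp
  omega
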